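/- arXiv:1706.06295 — 2 statements merged into one kernel-verified Lean document; each statement's English description precedes it below -/
import Mathlib

section
/- Let μ be a finite positive Borel measure on ℝ whose support is a compact set containing infinitely many points, let 1 < p < ∞ and n ∈ ℕ, and let P_{n+1,p} be the unique monic real polynomial of degree n+1 minimizing ∫ |P(x)|^p dμ(x) among monic real polynomials of degree n+1. Then every zero of P_{n+1,p} is simple; that is, P_{n+1,p} has no multiple roots (over ℂ). -/
open MeasureTheory Polynomial Filter

/-- The (topological) support of a Borel measure on `ℝ`. -/
def measureSupport (μ : Measure ℝ) : Set ℝ :=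
  {x : ℝ | ∀ U : Set ℝ, IsOpen U → x ∈ U → μ U ≠ 0}

lemma measureSupport_compl_null (μ : Measure ℝ) : μ (measureSupport μ)ᶜ = 0 := by
  have h : (measureSupport μ)ᶜ = ⋃₀ {U : Set ℝ | IsOpen U ∧ μ U = 0} := by
    ext x
    simp only [measureSupport, Set.mem_compl_iff, Set.mem_setOf_eq, Set.mem_sUnion]
    constructor
    · intro hx
      push_neg at hx
      obtain ⟨U, hU, hxU, hμU⟩ := hx
      exact ⟨U, ⟨hU, hμU⟩, hxU⟩
    · rintro ⟨U, ⟨hU, hμU⟩, hxU⟩ hcon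
      exact hcon U hU hxU hμU
  rw [h]
  obtain ⟨T, hTc, hTsub, hTeq⟩ :=
    TopologicalSpace.isOpen_sUnion_countable {U : Set ℝ | IsOpen U ∧ μ U = 0}
      (fun s hs => hs.1)
  rw [← hTeq]
  exact (measure_sUnion_null_iff hTc).2 fun s hs => (hTsub hs).2

lemma integrable_of_cont (μ : Measure ℝ) [IsFiniteMeasure μ]
    (hcomp : IsCompact (measureSupport μ)) {f : ℝ → ℝ} (hf : Continuous f) :
    Integrable f μ := by
  obtain ⟨C, hC⟩ := hcomp.exists_bound_of_continuousOn hf.continuousOn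
  refine Integrable.mono' (integrable_const C) hf.aestronglyMeasurable ?_
  have : {x : ℝ | ¬ ‖f x‖ ≤ C} ⊆ (measureSupport μ)ᶜ := by
    intro x hx hxs
    exact hx (hC x hxs)
  rw [ae_iff]
  exact measure_mono_null this (measureSupport_compl_null μ)

lemma meas_eval_ne_zero (μ : Measure ℝ) (hinf : (measureSupport μ).Infinite)
    {Q : Polynomial ℝ} (hQ : Q ≠ 0) : μ {x : ℝ | Q.eval x ≠ 0} ≠ 0 := by
  intro h0
  have hsub : measureSupport μ ⊆ {x : ℝ | Q.IsRoot x} := by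
    intro x hx
    by_contra hr
    have hopen : IsOpen {y : ℝ | Q.eval y ≠ 0} :=
      isOpen_compl_singleton.preimage Q.continuous
    exact hx _ hopen hr h0
  exact (Polynomial.finite_setOf_isRoot hQ).not_infinite (hinf.mono hsub)

/-- All zeros of the monic polynomial of degree `n+1` of minimal `L^p(μ)`-norm are simple:
for every complex number `z`, the square `(X - z)^2` does not divide `P` over `ℂ`. -/
theorem zeros_of_minimizer_are_simple
    (μ : Measure ℝ) [IsFiniteMeasure μ]
    (hcomp : IsCompact (measureSupport μ))
    (hinf : (measureSupport μ).Infinite)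
    (p : ℝ) (hp1 : 1 < p) (n : ℕ)
    (P : Polynomial ℝ) (hPmonic : P.Monic) (hPdeg : P.natDegree = n + 1)
    (hPmin : ∀ Q : Polynomial ℝ, Q.Monic → Q.natDegree = n + 1 →
      ∫ x, |P.eval x| ^ p ∂μ ≤ ∫ x, |Q.eval x| ^ p ∂μ) :
    ∀ z : ℂ, ¬ ((X - C z) ^ 2 ∣ P.map (algebraMap ℝ ℂ)) := by
  intro z hz
  classical
  set a : ℝ := z.re with ha
  set c : ℝ := z.im ^ 2 with hc
  have hc0 : 0 ≤ c := sq_nonneg _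
  set Dt : ℝ → Polynomial ℝ := fun t => (X - C a) ^ 2 + C (c - t) with hDt
  have hdegX2 : ((X - C a) ^ 2 : Polynomial ℝ).degree = 2 := by
    rw [degree_pow, degree_X_sub_C]; rfl
  have hClt : ∀ t : ℝ,
      (C (c - t) : Polynomial ℝ).degree < ((X - C a) ^ 2 : Polynomial ℝ).degree := by
    intro t
    refine lt_of_le_of_lt degree_C_le ?_
    rw [hdegX2]
    norm_num
  have hDtmonic : ∀ t, (Dt t).Monic := fun t =>
    ((monic_X_sub_C a).pow 2).add_of_left (hClt t)
  have hDtdeg : ∀ t, (Dt t).natDegree = 2 := by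
    intro t
    have hdeg : (Dt t).degree = 2 := by
      rw [hDt]
      simpa [hdegX2] using degree_add_eq_left_of_degree_lt (hClt t)
    exact natDegree_eq_of_degree_eq_some hdeg
  have hmapDt : (Dt 0).map (algebraMap ℝ ℂ) =
      (X - C ((a : ℝ) : ℂ)) ^ 2 + C ((c : ℝ) : ℂ) := by
    simp [hDt, Polynomial.map_add, Polynomial.map_pow, Polynomial.map_sub,
      Polynomial.map_C, Polynomial.map_X]
  have hdvd : Dt 0 ∣ P := by
    rw [← Polynomial.map_dvd_map (algebraMap ℝ ℂ) (algebraMap ℝ ℂ).injective (hDtmonic 0)]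
    by_cases hb : z.im = 0
    · have hza : ((a : ℝ) : ℂ) = z := by
        apply Complex.ext <;> simp [ha, hb]
      have hc' : c = 0 := by simp [hc, hb]
      rw [hmapDt, hc']
      simpa [hza] using hz
    · have h1 : (X - C z) ∣ P.map (algebraMap ℝ ℂ) :=
        (dvd_pow_self (X - C z) two_ne_zero).trans hz
      have hroot : aeval z P = 0 := by
        have h := (dvd_iff_isRoot).1 h1
        rwa [IsRoot, eval_map, ← aeval_def] at h
      have hroot' : ((X : Polynomial ℂ) - C ((starRingEnd ℂ) z)) ∣
          P.map (algebraMap ℝ ℂ) := by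
        rw [dvd_iff_isRoot, IsRoot, eval_map, ← aeval_def, Polynomial.aeval_conj,
          hroot, map_zero]
      have hne : z - (starRingEnd ℂ) z ≠ 0 := by
        rw [sub_ne_zero]
        intro h
        exact hb (Complex.conj_eq_iff_im.1 h.symm)
      have hcop : IsCoprime ((X : Polynomial ℂ) - C z) (X - C ((starRingEnd ℂ) z)) := by
        refine ⟨-C (z - (starRingEnd ℂ) z)⁻¹, C (z - (starRingEnd ℂ) z)⁻¹, ?_⟩
        have key : -C (z - (starRingEnd ℂ) z)⁻¹ * (X - C z) +
            C (z - (starRingEnd ℂ) z)⁻¹ * ((X : Polynomial ℂ) - C ((starRingEnd ℂ) z)) =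
            C ((z - (starRingEnd ℂ) z)⁻¹ * (z - (starRingEnd ℂ) z)) := by
          rw [C_mul, C_sub]
          ring
        rw [key, inv_mul_cancel₀ hne, C_1]
      have hmul := hcop.mul_dvd h1 hroot'
      have e1 : C z + C ((starRingEnd ℂ) z) = 2 * C ((a : ℝ) : ℂ) := by
        rw [← C_add, Complex.add_conj,
          show (((2 * z.re : ℝ) : ℂ)) = 2 * ((a : ℝ) : ℂ) by push_cast [ha]; ring,
          C_mul]
        simp [map_ofNat]
      have e2 : C z * C ((starRingEnd ℂ) z) =
          C ((a : ℝ) : ℂ) ^ 2 + C ((c : ℝ) : ℂ) := by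
        rw [← C_mul, Complex.mul_conj, ← map_pow, ← C_add]
        congr 1
        rw [Complex.normSq_apply]
        push_cast [ha, hc]
        ring
      have hexp : (Dt 0).map (algebraMap ℝ ℂ) =
          ((X : Polynomial ℂ) - C z) * (X - C ((starRingEnd ℂ) z)) := by
        rw [hmapDt]
        linear_combination (X : Polynomial ℂ) * e1 - e2
      rw [hexp]
      exact hmul
  obtain ⟨Q, hPQ⟩ := hdvd
  have hQmonic : Q.Monic := (hDtmonic 0).of_mul_monic_left (hPQ ▸ hPmonic)
  have hdeg2 : 2 + Q.natDegree = n + 1 := by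
    have h := (hDtmonic 0).natDegree_mul hQmonic
    rw [← hPQ, hPdeg, hDtdeg 0] at h
    omega
  set s : ℝ → ℝ := fun x => (x - a) ^ 2 + c with hs_def
  have hseval : ∀ t x, (Dt t).eval x = s x - t := by
    intro t x
    simp only [hDt, hs_def, eval_add, eval_pow, eval_sub, eval_X, eval_C]
    ring
  have hsnn : ∀ x, 0 ≤ s x := fun x => add_nonneg (sq_nonneg _) hc0
  have hscont : Continuous s := by
    simp only [hs_def]
    continuity
  have hQcont : Continuous fun x => Q.eval x := Q.continuous
  have habsQp : Continuous fun x => |Q.eval x| ^ p :=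
    (hQcont.abs).rpow_const fun x => Or.inr (by linarith)
  set F : ℝ → ℝ → ℝ := fun t x => |s x - t| ^ p * |Q.eval x| ^ p with hF_def
  have hFcont : ∀ t, Continuous (F t) := fun t =>
    (((hscont.sub continuous_const).abs).rpow_const fun x => Or.inr (by linarith)).mul habsQp
  have hFt : ∀ u : ℝ, (fun x => F u x) = fun x => |((Dt u) * Q).eval x| ^ p := by
    intro u
    funext x
    simp only [hF_def, eval_mul, hseval, abs_mul]
    rw [Real.mul_rpow (abs_nonneg _) (abs_nonneg _)]
  have hGmin : ∀ t, (∫ x, F 0 x ∂μ) ≤ ∫ x, F t x ∂μ := by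
    intro t
    calc (∫ x, F 0 x ∂μ) = ∫ x, |P.eval x| ^ p ∂μ := by rw [hFt 0, ← hPQ]
      _ ≤ ∫ x, |((Dt t) * Q).eval x| ^ p ∂μ := by
          refine hPmin _ ((hDtmonic t).mul hQmonic) ?_
          rw [(hDtmonic t).natDegree_mul hQmonic, hDtdeg t]
          exact hdeg2
      _ = ∫ x, F t x ∂μ := by rw [hFt t]
  set F' : ℝ → ℝ → ℝ :=
    fun t x => p * |s x - t| ^ (p - 2) * (s x - t) * -1 * |Q.eval x| ^ p with hF'_def
  have h_diff : ∀ x : ℝ, ∀ t ∈ Metric.ball (0 : ℝ) 1,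
      HasDerivAt (fun t => F t x) (F' t x) t := by
    intro x t _
    have h1 := hasDerivAt_abs_rpow (s x - t) hp1
    have h2 : HasDerivAt (fun u : ℝ => s x - u) (-1) t := by
      simpa using (hasDerivAt_id t).const_sub (s x)
    exact (h1.comp t h2).mul_const _
  have hkey0 : ∀ x, |s x| ^ (p - 2) * s x = (s x) ^ (p - 1) := by
    intro x
    rcases eq_or_lt_of_le (hsnn x) with h | h
    · rw [← h]
      simp [Real.zero_rpow (show p - 1 ≠ 0 by linarith)]
    · rw [abs_of_pos h, show p - 1 = (p - 2) + 1 by ring, Real.rpow_add h, Real.rpow_one]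
  have hF'0eq : ∀ x, F' 0 x = p * (s x) ^ (p - 1) * -1 * |Q.eval x| ^ p := by
    intro x
    simp only [hF'_def, sub_zero]
    rw [mul_assoc p, hkey0 x]
  have hg : Continuous fun x => p * (s x) ^ (p - 1) * -1 * |Q.eval x| ^ p :=
    ((continuous_const.mul (hscont.rpow_const fun x => Or.inr (by linarith))).mul
      continuous_const).mul habsQp
  have hF'meas : AEStronglyMeasurable (F' 0) μ :=
    hg.aestronglyMeasurable.congr (Filter.Eventually.of_forall fun x => (hF'0eq x).symm)
  set B : ℝ → ℝ := fun x => p * (s x + 1) ^ (p - 1) * |Q.eval x| ^ p with hB_def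
  have hBcont : Continuous B := by
    simp only [hB_def]
    exact (continuous_const.mul
      ((hscont.add continuous_const).rpow_const fun x => Or.inr (by linarith))).mul habsQp
  have hBint : Integrable B μ := integrable_of_cont μ hcomp hBcont
  have h_bound : ∀ x : ℝ, ∀ t ∈ Metric.ball (0 : ℝ) 1, ‖F' t x‖ ≤ B x := by
    intro x t ht
    have ht1 : |t| < 1 := by simpa [Real.dist_eq] using ht
    have habs : |s x - t| ≤ s x + 1 := by
      have h1 : |s x + -t| ≤ |s x| + |-t| := abs_add_le (s x) (-t)
      rw [abs_neg, abs_of_nonneg (hsnn x)] at h1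
      have : |s x - t| = |s x + -t| := by ring_nf
      rw [this]
      linarith
    have hub : ‖F' t x‖ = p * (|s x - t| ^ (p - 2) * |s x - t|) * |Q.eval x| ^ p := by
      simp only [hF'_def, Real.norm_eq_abs, abs_mul, abs_neg, abs_one, mul_one]
      rw [abs_of_pos (show (0 : ℝ) < p by linarith),
        abs_of_nonneg (Real.rpow_nonneg (abs_nonneg (s x - t)) (p - 2)),
        abs_of_nonneg (Real.rpow_nonneg (abs_nonneg (Q.eval x)) p)]
      ring
    have hkey : |s x - t| ^ (p - 2) * |s x - t| ≤ (s x + 1) ^ (p - 1) := by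
      rcases eq_or_ne (s x - t) 0 with h | h
      · rw [h]
        simp only [abs_zero, mul_zero]
        exact Real.rpow_nonneg (by linarith [hsnn x]) _
      · have habspos : 0 < |s x - t| := abs_pos.2 h
        have heq : |s x - t| ^ (p - 2) * |s x - t| = |s x - t| ^ (p - 1) := by
          rw [show p - 1 = (p - 2) + 1 by ring, Real.rpow_add habspos, Real.rpow_one]
        rw [heq]
        exact Real.rpow_le_rpow (abs_nonneg _) habs (by linarith)
    calc ‖F' t x‖ = p * (|s x - t| ^ (p - 2) * |s x - t|) * |Q.eval x| ^ p := hub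
      _ ≤ p * (s x + 1) ^ (p - 1) * |Q.eval x| ^ p := by
          refine mul_le_mul_of_nonneg_right ?_ (Real.rpow_nonneg (abs_nonneg _) _)
          exact mul_le_mul_of_nonneg_left hkey (by linarith)
      _ = B x := rfl
  obtain ⟨hF'int, hderiv⟩ := hasDerivAt_integral_of_dominated_loc_of_deriv_le
    (F := F) (F' := F') (x₀ := (0 : ℝ)) (s := Metric.ball (0 : ℝ) 1) (Metric.ball_mem_nhds (0 : ℝ) one_pos)
    (Filter.Eventually.of_forall fun t => (hFcont t).aestronglyMeasurable)
    (integrable_of_cont μ hcomp (hFcont 0))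
    hF'meas
    (Filter.Eventually.of_forall h_bound)
    hBint
    (Filter.Eventually.of_forall h_diff)
  set h : ℝ → ℝ := fun x => p * (s x) ^ (p - 1) * |Q.eval x| ^ p with hh_def
  have hhcont : Continuous h := by
    simp only [hh_def]
    exact (continuous_const.mul
      (hscont.rpow_const fun x => Or.inr (by linarith))).mul habsQp
  have hhnn : ∀ x, 0 ≤ h x := fun x =>
    mul_nonneg (mul_nonneg (by linarith) (Real.rpow_nonneg (hsnn x) _))
      (Real.rpow_nonneg (abs_nonneg _) _)
  have hint_eq : ∫ x, F' 0 x ∂μ = -∫ x, h x ∂μ := by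
    rw [← integral_neg]
    refine integral_congr_ae (Filter.Eventually.of_forall fun x => ?_)
    rw [hF'0eq x]
    simp only [hh_def]
    ring
  have hIpos : 0 < ∫ x, h x ∂μ := by
    have hint : Integrable h μ := integrable_of_cont μ hcomp hhcont
    rcases (integral_nonneg (f := h) hhnn).lt_or_eq with hlt | heq
    · exact hlt
    · exfalso
      have hae : h =ᵐ[μ] 0 := (integral_eq_zero_iff_of_nonneg hhnn hint).1 heq.symm
      have hnull : μ {x | h x ≠ 0} = 0 := by
        have := hae
        rw [Filter.EventuallyEq, ae_iff] at this
        simpa using this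
      have hsubset : {x : ℝ | P.eval x ≠ 0} ⊆ {x | h x ≠ 0} := by
        intro x hx
        have hPx : P.eval x = s x * Q.eval x := by
          rw [hPQ, eval_mul, hseval 0 x]
          ring
        have hx' : s x * Q.eval x ≠ 0 := by
          rw [← hPx]
          exact hx
        have hs0 : 0 < s x := (hsnn x).lt_of_ne (Ne.symm (left_ne_zero_of_mul hx'))
        have hQ0 : Q.eval x ≠ 0 := right_ne_zero_of_mul hx'
        have hpos : 0 < h x := by
          simp only [hh_def]
          exact mul_pos (mul_pos (by linarith) (Real.rpow_pos_of_pos hs0 _))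
            (Real.rpow_pos_of_pos (abs_pos.2 hQ0) _)
        exact hpos.ne'
      exact meas_eval_ne_zero μ hinf hPmonic.ne_zero (measure_mono_null hsubset hnull)
  have hI_lt : (∫ x, F' 0 x ∂μ) < 0 := by
    rw [hint_eq]
    linarith
  have hslope := hasDerivAt_iff_tendsto_slope.1 hderiv
  have h2 : Filter.Tendsto (slope (fun t => ∫ x, F t x ∂μ) 0)
      (nhdsWithin 0 (Set.Ioi 0)) (nhds (∫ x, F' 0 x ∂μ)) :=
    hslope.mono_left (nhdsWithin_mono 0 fun x hx => ne_of_gt hx)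
  have h3 : 0 ≤ ∫ x, F' 0 x ∂μ := by
    refine ge_of_tendsto h2 ?_
    filter_upwards [self_mem_nhdsWithin] with t ht
    rw [slope_def_field]
    refine div_nonneg (by linarith [hGmin t]) ?_
    have := Set.mem_Ioi.1 ht
    linarith
  linarith
end

section
/- Let μ be a finite positive Borel measure on ℝ whose support is a compact set containing infinitely many points, let 2 ≤ p < ∞, let n ∈ ℕ, and let x₀, …, x_n be distinct real numbers. For 𝐱 = (x₀,…,x_n) set P_{n+1}(x) := (x − x₀)⋯(x − x_n) and f_k(𝐱) := ∫ |P_{n+1}(x)|^p/(x − x_k) dμ(x) (interpreted as in the standard way with the polynomial quotient). Then for j ≠ k, f_k is partially differentiable with respect to x_j with ∂f_k/∂x_j (𝐱) = p ∫ (1/(x − x_k)) · (∂P_{n+1}/∂x_j)(x) · |P_{n+1}(x)|^{p−1} · sgn(P_{n+1}(x)) dμ(x), where ∂P_{n+1}/∂x_j (x) = −∏_{i≠j}(x − x_i). -/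
open MeasureTheory Polynomial Finset

lemma rsign_mul (a b : ℝ) : Real.sign (a*b) = Real.sign a * Real.sign b := by
  rcases lt_trichotomy a 0 with ha|rfl|ha <;> rcases lt_trichotomy b 0 with hb|rfl|hb <;>
    simp [Real.sign_of_neg, Real.sign_of_pos, mul_pos, mul_neg_of_neg_of_pos,
      mul_neg_of_pos_of_neg, mul_pos_of_neg_of_neg, *]

lemma measurable_rsign : Measurable Real.sign := by
  unfold Real.sign
  exact Measurable.ite (measurableSet_lt measurable_id measurable_const) measurable_const
    (Measurable.ite (measurableSet_lt measurable_const measurable_id) measurable_const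
      measurable_const)

lemma abs_rsign_le (a : ℝ) : |Real.sign a| ≤ 1 := by
  rcases Real.sign_apply_eq a with h|h|h <;> rw [h] <;> norm_num

lemma mul_rsign_eq_abs (a : ℝ) : a * Real.sign a = |a| := by
  rcases lt_trichotomy a 0 with h|rfl|h <;>
    simp [Real.sign_of_neg, Real.sign_of_pos, abs_of_neg, abs_of_pos, *]

lemma rsign_mul_abs (a : ℝ) : Real.sign a * |a| = a := by
  rcases lt_trichotomy a 0 with h|rfl|h <;>
    simp [Real.sign_of_neg, Real.sign_of_pos, abs_of_neg, abs_of_pos, *]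

lemma self_mul_abs_rpow {p : ℝ} (hp1 : 1 < p) (y : ℝ) :
    y * |y| ^ (p-1) * Real.sign y = |y| ^ p := by
  rcases eq_or_ne y 0 with rfl|h
  · simp [Real.zero_rpow (by linarith : p - 1 ≠ 0), Real.zero_rpow (by linarith : p ≠ 0)]
  · have h1 : y * Real.sign y = |y| := mul_rsign_eq_abs y
    calc y * |y| ^ (p-1) * Real.sign y = (y * Real.sign y) * |y| ^ (p-1) := by ring
      _ = |y| ^ (1:ℝ) * |y| ^ (p-1) := by rw [h1, Real.rpow_one]
      _ = |y| ^ p := by rw [← Real.rpow_add (abs_pos.2 h)]; ring_nf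

lemma hasDerivAt_abs_rpow' {p : ℝ} (hp1 : 1 < p) (y : ℝ) :
    HasDerivAt (fun z : ℝ => |z| ^ p) (p * |y| ^ (p-1) * Real.sign y) y := by
  refine (hasDerivAt_abs_rpow y hp1).congr_deriv ?_
  rcases eq_or_ne y 0 with rfl|h
  · simp [Real.zero_rpow (by linarith : p - 1 ≠ 0)]
  · have h2 : |y| ^ (p-1) = |y| ^ (p-2) * |y| := by
      rw [show p - 1 = (p-2) + 1 by ring, Real.rpow_add (abs_pos.2 h), Real.rpow_one]
    have h3 : p * |y| ^ (p-1) * Real.sign y = p * |y|^(p-2) * (Real.sign y * |y|) := by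
      rw [h2]; ring
    rw [h3, rsign_mul_abs]

/-- With `P_{n+1}(x) = ∏_j (x - x_j)` and
`f_k(𝐱) = ∫ |P_{n+1}(x)|^p / (x - x_k) dμ(x)` (the integrand interpreted as the
everywhere-defined product
`(∏_{i≠k}(x - x_i)) · |x - x_k|^{p-1} sgn(x - x_k) · |∏_{i≠k}(x - x_i)|^{p-1} sgn(∏_{i≠k}(x - x_i))`),
the function `f_k` is, for `j ≠ k`, partially differentiable with respect to `x_j` with
`∂f_k/∂x_j = p ∫ (1/(x - x_k)) · (∂P_{n+1}/∂x_j)(x) · |P_{n+1}(x)|^{p-1} · sgn(P_{n+1}(x)) dμ(x)`,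
where `∂P_{n+1}/∂x_j (x) = -∏_{i≠j}(x - x_i)`; the factor `(x - x_k)` of
`∂P_{n+1}/∂x_j` cancels `1/(x - x_k)`, so the integrand is the everywhere-defined product
`-(∏_{i≠j,i≠k}(x - x_i)) · |P_{n+1}(x)|^{p-1} · sgn(P_{n+1}(x))`. -/
theorem partial_deriv_fk_xj
    (μ : Measure ℝ) [IsFiniteMeasure μ]
    (hcomp : IsCompact (measureSupport μ))
    (hinf : (measureSupport μ).Infinite)
    (p : ℝ) (hp2 : 2 ≤ p) (n : ℕ)
    (x : Fin (n + 1) → ℝ) (hx : Function.Injective x)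
    (k j : Fin (n + 1)) (hjk : j ≠ k)
    (f : (Fin (n + 1) → ℝ) → ℝ)
    (hf : f = fun v : Fin (n + 1) → ℝ => ∫ t : ℝ,
      (∏ i ∈ Finset.univ.erase k, (t - v i)) * |t - v k| ^ (p - 1) * Real.sign (t - v k)
        * |∏ i ∈ Finset.univ.erase k, (t - v i)| ^ (p - 1)
        * Real.sign (∏ i ∈ Finset.univ.erase k, (t - v i)) ∂μ) :
    HasDerivAt (fun s : ℝ => f (Function.update x j s))
      (p * ∫ t : ℝ,
        (-(∏ i ∈ (Finset.univ.erase j).erase k, (t - x i)))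
          * |∏ i, (t - x i)| ^ (p - 1) * Real.sign (∏ i, (t - x i)) ∂μ) (x j) := by
  subst hf
  have hp1 : (1:ℝ) < p := by linarith
  have hp0 : (0:ℝ) ≤ p := by linarith
  -- the complement of the support is null
  have hnull : μ (measureSupport μ)ᶜ = 0 := by
    apply measure_null_of_locally_null
    intro y hy
    rw [Set.mem_compl_iff, measureSupport, Set.mem_setOf_eq] at hy
    push_neg at hy
    obtain ⟨U, hUo, hyU, hμU⟩ := hy
    exact ⟨U, mem_nhdsWithin_of_mem_nhds (hUo.mem_nhds hyU), hμU⟩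
  have haeS : ∀ᵐ t ∂μ, t ∈ measureSupport μ := by
    rw [MeasureTheory.ae_iff]
    exact hnull
  obtain ⟨R, hR⟩ := hcomp.isBounded.subset_closedBall 0
  have hae : ∀ᵐ t ∂μ, |t| ≤ R := by
    filter_upwards [haeS] with t ht
    simpa [Real.dist_eq] using hR ht
  -- notation
  set S : Finset (Fin (n+1)) := (Finset.univ.erase k).erase j with hSdef
  set Q : ℝ → ℝ := fun t => ∏ i ∈ S, (t - x i) with hQdef
  set g : ℝ → ℝ := fun t => |t - x k| ^ (p-1) * Real.sign (t - x k) * |Q t| ^ p with hgdef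
  have hjmem : j ∈ Finset.univ.erase k := Finset.mem_erase.2 ⟨hjk, Finset.mem_univ j⟩
  have hprod : ∀ (s t : ℝ),
      (∏ i ∈ Finset.univ.erase k, (t - Function.update x j s i)) = (t - s) * Q t := by
    intro s t
    rw [← Finset.mul_prod_erase _ _ hjmem, Function.update_self]
    congr 1
    refine Finset.prod_congr rfl fun i hi => ?_
    rw [Function.update_of_ne (Finset.ne_of_mem_erase hi)]
  -- rewrite the integrand
  have hFeq : ∀ s : ℝ, (∫ t : ℝ,
      (∏ i ∈ Finset.univ.erase k, (t - Function.update x j s i))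
        * |t - Function.update x j s k| ^ (p - 1) * Real.sign (t - Function.update x j s k)
        * |∏ i ∈ Finset.univ.erase k, (t - Function.update x j s i)| ^ (p - 1)
        * Real.sign (∏ i ∈ Finset.univ.erase k, (t - Function.update x j s i)) ∂μ)
      = ∫ t : ℝ, |t - s| ^ p * g t ∂μ := by
    intro s
    refine MeasureTheory.integral_congr_ae (Filter.Eventually.of_forall fun t => ?_)
    dsimp only
    rw [hprod, Function.update_of_ne (Ne.symm hjk)]
    have key := self_mul_abs_rpow hp1 ((t - s) * Q t)
    have e1 : (t - s) * Q t * |t - x k| ^ (p - 1) * Real.sign (t - x k)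
        * |(t - s) * Q t| ^ (p - 1) * Real.sign ((t - s) * Q t)
        = ((t - s) * Q t * |(t - s) * Q t| ^ (p-1) * Real.sign ((t - s) * Q t))
          * (|t - x k| ^ (p-1) * Real.sign (t - x k)) := by ring
    rw [e1, key, abs_mul, Real.mul_rpow (abs_nonneg _) (abs_nonneg _), hgdef]
    ring
  -- constants and bounds
  set C0 : ℝ := |R| + (∑ i, |x i|) + |x j| + 2 with hC0def
  have hsum0 : (0:ℝ) ≤ ∑ i, |x i| := Finset.sum_nonneg fun i _ => abs_nonneg _
  have hC1 : (1:ℝ) ≤ C0 := by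
    have h1 := abs_nonneg R; have h2 := abs_nonneg (x j)
    simp only [hC0def]; linarith
  have hC0pos : (0:ℝ) < C0 := by linarith
  have htxi : ∀ t : ℝ, |t| ≤ R → ∀ i, |t - x i| ≤ C0 := by
    intro t ht i
    have h1 : |x i| ≤ ∑ i', |x i'| :=
      Finset.single_le_sum (fun i' _ => abs_nonneg (x i')) (Finset.mem_univ i)
    have h2 : |t| ≤ |R| := ht.trans (le_abs_self R)
    have h3 : |t - x i| ≤ |t| + |x i| := by
      have := abs_add_le t (-(x i)); simpa [sub_eq_add_neg] using this
    have h4 := abs_nonneg (x j)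
    simp only [hC0def]; linarith
  have hQb : ∀ t : ℝ, |t| ≤ R → |Q t| ≤ C0 ^ (n+1) := by
    intro t ht
    calc |Q t| = ∏ i ∈ S, |t - x i| := Finset.abs_prod _ _
      _ ≤ ∏ _i ∈ S, C0 :=
          Finset.prod_le_prod (fun i _ => abs_nonneg _) (fun i _ => htxi t ht i)
      _ = C0 ^ S.card := by rw [Finset.prod_const]
      _ ≤ C0 ^ (n+1) := by
          apply pow_le_pow_right₀ hC1
          simpa using Finset.card_le_univ S
  set D : ℝ := C0 ^ (p-1) * ((C0 ^ (n+1) : ℝ)) ^ p with hDdef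
  have hD0 : (0:ℝ) ≤ D := by positivity
  have hgb : ∀ t : ℝ, |t| ≤ R → |g t| ≤ D := by
    intro t ht
    have e1 : |g t| = |t - x k| ^ (p-1) * |Real.sign (t - x k)| * |Q t| ^ p := by
      rw [hgdef]
      dsimp only
      rw [abs_mul, abs_mul, abs_of_nonneg (Real.rpow_nonneg (abs_nonneg _) _),
        abs_of_nonneg (Real.rpow_nonneg (abs_nonneg _) _)]
    rw [e1]
    have h1 : |t - x k| ^ (p-1) ≤ C0 ^ (p-1) :=
      Real.rpow_le_rpow (abs_nonneg _) (htxi t ht k) (by linarith)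
    have h2 : |Q t| ^ p ≤ ((C0 ^ (n+1):ℝ)) ^ p :=
      Real.rpow_le_rpow (abs_nonneg _) (hQb t ht) hp0
    have h3 := abs_rsign_le (t - x k)
    calc |t - x k| ^ (p-1) * |Real.sign (t - x k)| * |Q t| ^ p
        ≤ C0 ^ (p-1) * 1 * ((C0 ^ (n+1):ℝ)) ^ p := by
          gcongr
      _ = D := by rw [hDdef]; ring
  -- measurability
  have hcont : ∀ q : ℝ, 0 ≤ q → Continuous (fun y : ℝ => y ^ q) :=
    fun q hq => Real.continuous_rpow_const hq
  have hQm : Measurable Q := by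
    rw [hQdef]
    exact Finset.measurable_prod _ fun i _ => measurable_id.sub_const (x i)
  have hgm : Measurable g := by
    rw [hgdef]
    refine Measurable.mul (Measurable.mul ?_ ?_) ?_
    · exact ((hcont _ (by linarith)).measurable).comp (measurable_id.sub_const (x k)).abs
    · exact measurable_rsign.comp (measurable_id.sub_const (x k))
    · exact ((hcont _ hp0).measurable).comp hQm.abs
  have hmeasF : ∀ s : ℝ, AEStronglyMeasurable (fun t => |t - s| ^ p * g t) μ := by
    intro s
    exact ((((hcont _ hp0).measurable).comp (measurable_id.sub_const s).abs).mul
      hgm).aestronglyMeasurable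
  have hmeasF' : AEStronglyMeasurable
      (fun t => -(p * |t - x j| ^ (p-1) * Real.sign (t - x j)) * g t) μ := by
    apply Measurable.aestronglyMeasurable
    refine Measurable.mul (Measurable.neg ?_) hgm
    exact (measurable_const.mul (((hcont _ (by linarith)).measurable).comp
      (measurable_id.sub_const (x j)).abs)).mul
      (measurable_rsign.comp (measurable_id.sub_const (x j)))
  have hts : ∀ (t s : ℝ), |t| ≤ R → s ∈ Metric.ball (x j) 1 → |t - s| ≤ C0 := by
    intro t s ht hs
    have h2 : |t| ≤ |R| := ht.trans (le_abs_self R)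
    have h3 : |s - x j| < 1 := by simpa [Real.dist_eq] using hs
    have h4 : |s| ≤ |s - x j| + |x j| := by
      have := abs_add_le (s - x j) (x j); simpa using this
    have h5 : |t - s| ≤ |t| + |s| := by
      have := abs_add_le t (-s); simpa [sub_eq_add_neg] using this
    simp only [hC0def]; linarith
  -- the bound
  have hbound : ∀ᵐ t ∂μ, ∀ s ∈ Metric.ball (x j) 1,
      ‖-(p * |t - s| ^ (p-1) * Real.sign (t - s)) * g t‖ ≤ p * C0 ^ (p-1) * D := by
    filter_upwards [hae] with t ht
    intro s hs
    rw [Real.norm_eq_abs, abs_mul, abs_neg, abs_mul, abs_mul, abs_of_nonneg hp0,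
      abs_of_nonneg (Real.rpow_nonneg (abs_nonneg _) _)]
    have h1 : |t - s| ^ (p-1) ≤ C0 ^ (p-1) :=
      Real.rpow_le_rpow (abs_nonneg _) (hts t s ht hs) (by linarith)
    have h3 := abs_rsign_le (t - s)
    have h4 := hgb t ht
    calc p * |t - s| ^ (p-1) * |Real.sign (t - s)| * |g t|
        ≤ p * (C0 ^ (p-1)) * 1 * D := by gcongr
      _ = p * C0 ^ (p-1) * D := by ring
  have hbound_int : Integrable (fun _ : ℝ => p * C0 ^ (p-1) * D) μ := integrable_const _
  have hFint : Integrable (fun t => |t - x j| ^ p * g t) μ := by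
    refine Integrable.mono' (integrable_const (C0 ^ p * D)) (hmeasF (x j)) ?_
    filter_upwards [hae] with t ht
    rw [Real.norm_eq_abs, abs_mul, abs_of_nonneg (Real.rpow_nonneg (abs_nonneg _) _)]
    have h1 : |t - x j| ^ p ≤ C0 ^ p :=
      Real.rpow_le_rpow (abs_nonneg _) (hts t (x j) ht (Metric.mem_ball_self one_pos)) hp0
    exact mul_le_mul h1 (hgb t ht) (abs_nonneg _) (by positivity)
  -- differentiability of the integrand
  have hdiff : ∀ᵐ t ∂μ, ∀ s ∈ Metric.ball (x j) 1,
      HasDerivAt (fun s' => |t - s'| ^ p * g t)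
        (-(p * |t - s| ^ (p-1) * Real.sign (t - s)) * g t) s := by
    refine Filter.Eventually.of_forall fun t s _ => ?_
    have h1 := hasDerivAt_abs_rpow' hp1 (t - s)
    have h2 : HasDerivAt (fun s' : ℝ => t - s') (-1) s := (hasDerivAt_id s).const_sub t
    have h3 := (h1.comp s h2).mul_const (g t)
    refine h3.congr_deriv ?_
    ring
  have hmain := hasDerivAt_integral_of_dominated_loc_of_deriv_le
    (F := fun s t => |t - s| ^ p * g t)
    (F' := fun s t => -(p * |t - s| ^ (p-1) * Real.sign (t - s)) * g t)
    (bound := fun _ => p * C0 ^ (p-1) * D)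
    (Metric.ball_mem_nhds (x j) one_pos) (Filter.Eventually.of_forall hmeasF) hFint hmeasF' hbound hbound_int hdiff
  -- identify the derivative value
  have hval : (∫ t, -(p * |t - x j| ^ (p-1) * Real.sign (t - x j)) * g t ∂μ)
      = p * ∫ t : ℝ, (-(∏ i ∈ (Finset.univ.erase j).erase k, (t - x i)))
          * |∏ i, (t - x i)| ^ (p - 1) * Real.sign (∏ i, (t - x i)) ∂μ := by
    rw [← MeasureTheory.integral_const_mul]
    refine MeasureTheory.integral_congr_ae (Filter.Eventually.of_forall fun t => ?_)
    dsimp only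
    have hSS : (Finset.univ.erase j).erase k = S := by
      rw [hSdef]; exact Finset.erase_right_comm
    have hkmem : k ∈ Finset.univ.erase j := Finset.mem_erase.2 ⟨Ne.symm hjk, Finset.mem_univ k⟩
    have hP : (∏ i, (t - x i)) = (t - x j) * ((t - x k) * Q t) := by
      rw [← Finset.mul_prod_erase Finset.univ _ (Finset.mem_univ j),
        ← Finset.mul_prod_erase _ _ hkmem, hSS]
    rw [hP, hSS]
    rw [rsign_mul, rsign_mul, abs_mul, abs_mul,
      Real.mul_rpow (abs_nonneg _) (mul_nonneg (abs_nonneg _) (abs_nonneg _)),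
      Real.mul_rpow (abs_nonneg _) (abs_nonneg _), hgdef]
    dsimp only
    linear_combination ((|t - x j| ^ (p-1) * Real.sign (t - x j))
      * (|t - x k| ^ (p-1) * Real.sign (t - x k)) * p) * (self_mul_abs_rpow hp1 (Q t))
  exact (hmain.2.congr_deriv hval).congr_of_eventuallyEq
    (Filter.Eventually.of_forall fun s => hFeq s)
end
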